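/- Let 𝒪 be an order ideal in P = K[x_0,…,x_n], fix a labeling of ∂𝒪 ordered increasingly by degree, and let G be a homogeneous ∂𝒪-prebasis. Then the border reduction relation →_G is Noetherian: there is no infinite chain f_1 →_G f_2 →_G f_3 →_G ⋯ of polynomials in P. -/

import Mathlib

open MvPolynomial

namespace Border

/-- A term of `K[x_0, …, x_n]`, identified with its exponent vector. -/
abbrev Term (n : ℕ) := Fin (n + 1) →₀ ℕ

variable {n : ℕ}

/-- The (standard) degree of a term. -/
def tdeg (m : Term n) : ℕ := ∑ i, m i

/-- An order ideal: a nonempty set of terms closed under divisors. -/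
def IsOrderIdeal (O : Set (Term n)) : Prop :=
  O.Nonempty ∧ ∀ τ ∈ O, ∀ τ' : Term n, τ' ≤ τ → τ' ∈ O

/-- The border `∂𝒪 = (x_0·𝒪 ∪ ⋯ ∪ x_n·𝒪) ∖ 𝒪`. -/
def border (O : Set (Term n)) : Set (Term n) :=
  {σ | σ ∉ O ∧ ∃ r : Fin (n + 1), ∃ τ ∈ O, σ = τ + Finsupp.single r 1}

/-- Multiplicative set of a border term `σ`, with respect to a labeling `lab` of the border:
`𝒯_σ = {η : σ' ∤ η·σ for every border term σ' with a larger label}`. -/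
def mulSet (O : Set (Term n)) (lab : Term n → ℕ) (σ : Term n) : Set (Term n) :=
  {η | ∀ σ' ∈ border O, lab σ < lab σ' → ¬ σ' ≤ η + σ}

/-- The cone `C(σ) = {η·σ : η ∈ 𝒯_σ}`. -/
def cone (O : Set (Term n)) (lab : Term n → ℕ) (σ : Term n) : Set (Term n) :=
  (fun η => η + σ) '' mulSet O lab σ

/-- A labeling of the border which is injective and ordered increasingly by degree. -/
def DegOrderedLabeling (O : Set (Term n)) (lab : Term n → ℕ) : Prop :=
  Set.InjOn lab (border O) ∧
    ∀ σ ∈ border O, ∀ σ' ∈ border O, lab σ < lab σ' → tdeg σ ≤ tdeg σ'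

/-- Iterated border closures: `∂⁰𝒪 := 𝒪`, and the `(k+1)`-st closure adds the border. -/
def borderClosure (O : Set (Term n)) : ℕ → Set (Term n)
  | 0 => O
  | k + 1 => borderClosure O k ∪ border (borderClosure O k)

/-- The index `ind_𝒪(τ)`: the least `k` with `τ ∈ ∂^k𝒪`. -/
noncomputable def ind (O : Set (Term n)) (τ : Term n) : ℕ :=
  sInf {k | τ ∈ borderClosure O k}

/-- Degree-`d` part of a set of terms. -/
def Od (O : Set (Term n)) (d : ℕ) : Set (Term n) := {τ | τ ∈ O ∧ tdeg τ = d}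

variable {K : Type*} [Field K]

/-- The index of a nonzero polynomial: the maximal index of a term of its support. -/
noncomputable def indP (O : Set (Term n)) (f : MvPolynomial (Fin (n + 1)) K) : ℕ :=
  f.support.sup (ind O)

/-- A homogeneous `∂𝒪`-prebasis: a family `g σ = σ - Σ_{τ ∈ 𝒪_{deg σ}} c_{στ} τ`. -/
def IsPrebasis (O : Set (Term n)) (g : Term n → MvPolynomial (Fin (n + 1)) K) : Prop :=
  ∀ σ ∈ border O, ∀ τ ∈ (monomial σ (1 : K) - g σ).support, τ ∈ O ∧ tdeg τ = tdeg σ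

/-- The set of border reductors `𝒯G = {η·g_σ : σ ∈ ∂𝒪, η ∈ 𝒯_σ}`. -/
def reductors (O : Set (Term n)) (lab : Term n → ℕ)
    (g : Term n → MvPolynomial (Fin (n + 1)) K) : Set (MvPolynomial (Fin (n + 1)) K) :=
  {p | ∃ σ ∈ border O, ∃ η ∈ mulSet O lab σ, p = monomial η (1 : K) * g σ}

/-- The degree-`d` border reductors `𝒯G_d = 𝒯G ∩ P_d`. -/
def reductorsDeg (O : Set (Term n)) (lab : Term n → ℕ)
    (g : Term n → MvPolynomial (Fin (n + 1)) K) (d : ℕ) :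
    Set (MvPolynomial (Fin (n + 1)) K) :=
  reductors O lab g ∩ {p | p.IsHomogeneous d}

/-- One step of the border reduction relation `→_G`. -/
def Step (O : Set (Term n)) (lab : Term n → ℕ)
    (g : Term n → MvPolynomial (Fin (n + 1)) K)
    (f h : MvPolynomial (Fin (n + 1)) K) : Prop :=
  ∃ σ ∈ border O, ∃ η ∈ mulSet O lab σ, η + σ ∈ f.support ∧
    h = f - f.coeff (η + σ) • (monomial η (1 : K) * g σ)

/-- The border reduction relation `→⁺_G` (finitely many, possibly zero, steps). -/
def Reduces (O : Set (Term n)) (lab : Term n → ℕ)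
    (g : Term n → MvPolynomial (Fin (n + 1)) K) :
    MvPolynomial (Fin (n + 1)) K → MvPolynomial (Fin (n + 1)) K → Prop :=
  Relation.ReflTransGen (Step O lab g)

/-- The `K`-vector space spanned by a set of terms. -/
noncomputable def spanTerms (K : Type*) [Field K] (S : Set (Term n)) :
    Submodule K (MvPolynomial (Fin (n + 1)) K) :=
  Submodule.span K ((fun τ => monomial τ (1 : K)) '' S)

/-- The ideal `(G)` generated by a `∂𝒪`-prebasis. -/
noncomputable def idealG (O : Set (Term n)) (g : Term n → MvPolynomial (Fin (n + 1)) K) :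
    Ideal (MvPolynomial (Fin (n + 1)) K) :=
  Ideal.span (g '' border O)

/-- The degree-`d` part `I_d` of an ideal, as a `K`-vector subspace. -/
noncomputable def degPart (I : Ideal (MvPolynomial (Fin (n + 1)) K)) (d : ℕ) :
    Submodule K (MvPolynomial (Fin (n + 1)) K) :=
  Submodule.restrictScalars K I ⊓ homogeneousSubmodule (Fin (n + 1)) K d

/-- Homogeneous ideal. -/
def IsHomogeneousIdeal (I : Ideal (MvPolynomial (Fin (n + 1)) K)) : Prop :=
  ∀ f ∈ I, ∀ d : ℕ, homogeneousComponent d f ∈ I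

/-- `G` is a homogeneous `∂𝒪`-basis of `J`: it is a prebasis contained in `J` and for every
`d` one has `P_d = J_d ⊕ ⟨𝒪_d⟩`, i.e. the residue classes of `𝒪_d` are a basis of `P_d/J_d`. -/
def IsBorderBasisOf (O : Set (Term n)) (g : Term n → MvPolynomial (Fin (n + 1)) K)
    (J : Ideal (MvPolynomial (Fin (n + 1)) K)) : Prop :=
  IsPrebasis O g ∧ (∀ σ ∈ border O, g σ ∈ J) ∧
    ∀ d : ℕ, degPart J d ⊔ spanTerms K (Od O d) = homogeneousSubmodule (Fin (n + 1)) K d ∧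
      Disjoint (degPart J d) (spanTerms K (Od O d))

/-- An `m`-lower representation of `f` by `𝒯G`: `f = Σ c_j • η_j·g_{σ_j}` with distinct
pairs `(η_j, σ_j)`, `η_j ∈ 𝒯_{σ_j}` and `ind(η_j σ_j) ≤ m`. -/
def HasLRep (O : Set (Term n)) (lab : Term n → ℕ)
    (g : Term n → MvPolynomial (Fin (n + 1)) K)
    (f : MvPolynomial (Fin (n + 1)) K) (m : ℕ) : Prop :=
  ∃ (s : Finset (Term n × Term n)) (c : Term n × Term n → K),
    (∀ p ∈ s, p.2 ∈ border O ∧ p.1 ∈ mulSet O lab p.2 ∧ ind O (p.1 + p.2) ≤ m) ∧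
    f = ∑ p ∈ s, c p • (monomial p.1 (1 : K) * g p.2)

/-- An `m`-lower representation of `f` by `𝒯G_d`. -/
def HasLRepDeg (O : Set (Term n)) (lab : Term n → ℕ)
    (g : Term n → MvPolynomial (Fin (n + 1)) K)
    (f : MvPolynomial (Fin (n + 1)) K) (m d : ℕ) : Prop :=
  ∃ (s : Finset (Term n × Term n)) (c : Term n × Term n → K),
    (∀ p ∈ s, p.2 ∈ border O ∧ p.1 ∈ mulSet O lab p.2 ∧ ind O (p.1 + p.2) ≤ m ∧
      (monomial p.1 (1 : K) * g p.2).IsHomogeneous d) ∧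
    f = ∑ p ∈ s, c p • (monomial p.1 (1 : K) * g p.2)

/-- The subtype of terms of `𝒪` of degree `d`. -/
abbrev OdSub (O : Set (Term n)) (d : ℕ) : Type _ := {τ : Term n // τ ∈ Od O d}

lemma tdeg_component_lt {d : ℕ} (m : Term n) (h : tdeg m = d) (i : Fin (n + 1)) :
    m i < d + 1 := by
  have : m i ≤ tdeg m :=
    Finset.single_le_sum (f := fun j => m j) (fun j _ => Nat.zero_le _) (Finset.mem_univ i)
  omega

instance (O : Set (Term n)) (d : ℕ) : Finite (OdSub O d) := by
  have hinj : Function.Injective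
      (fun τ : OdSub O d => fun i : Fin (n + 1) =>
        (⟨τ.1 i, tdeg_component_lt τ.1 τ.2.2 i⟩ : Fin (d + 1))) := by
    intro a b hab
    apply Subtype.ext
    apply Finsupp.ext
    intro i
    simpa using congrArg Fin.val (congrFun hab i)
  exact Finite.of_injective _ hinj

noncomputable instance (O : Set (Term n)) (d : ℕ) : Fintype (OdSub O d) :=
  Fintype.ofFinite _

open scoped Classical in
/-- The `r`-th `d`-graded formal multiplication matrix of a prebasis `G`,
with rows indexed by `𝒪_{d+1}` and columns by `𝒪_d`. -/
noncomputable def multMatrix (O : Set (Term n))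
    (g : Term n → MvPolynomial (Fin (n + 1)) K) (r : Fin (n + 1)) (d : ℕ) :
    Matrix (OdSub O (d + 1)) (OdSub O d) K :=
  Matrix.of fun τ' τ =>
    if τ.1 + Finsupp.single r 1 ∈ O then
      (if τ.1 + Finsupp.single r 1 = τ'.1 then 1 else 0)
    else (monomial (τ.1 + Finsupp.single r 1) (1 : K)
            - g (τ.1 + Finsupp.single r 1)).coeff τ'.1

/-- The minimum degree of a border term. -/
noncomputable def minDegBorder (O : Set (Term n)) : ℕ := sInf (tdeg '' border O)

/-- The `d`-th Macaulay transformation `a^{⟨d⟩}`, computed greedily. -/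
noncomputable def macaulay : ℕ → ℕ → ℕ
  | 0, _ => 0
  | d + 1, a =>
    if a = 0 then 0
    else
      Nat.choose (sSup {k | Nat.choose k (d + 1) ≤ a} + 1) (d + 2) +
        macaulay d (a - Nat.choose (sSup {k | Nat.choose k (d + 1) ≤ a}) (d + 1))

/-- An ideal is generated in degrees `≤ m` if it is generated by its homogeneous
elements of degree `≤ m`. -/
def GeneratedInDegLE (I : Ideal (MvPolynomial (Fin (n + 1)) K)) (m : ℕ) : Prop :=
  I = Ideal.span {f | f ∈ I ∧ ∃ d ≤ m, f.IsHomogeneous d}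

/-! ### Auxiliary lemmas for Noetherianity -/

lemma tdeg_add' (a b : Term n) : tdeg (a + b) = tdeg a + tdeg b := by
  simp [tdeg, Finsupp.add_apply, Finset.sum_add_distrib]

lemma tdeg_single' (r : Fin (n + 1)) : tdeg (Finsupp.single r 1 : Term n) = 1 := by
  classical
  simp [tdeg, Finsupp.single_apply]

lemma tdeg_zero' : tdeg (0 : Term n) = 0 := by simp [tdeg]

lemma zero_mem_of {O : Set (Term n)} (hO : IsOrderIdeal O) : (0 : Term n) ∈ O := by
  obtain ⟨τ, hτ⟩ := hO.1
  exact hO.2 τ hτ 0 zero_le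

lemma eq_of_le_tdeg {a b : Term n} (h : a ≤ b) (h2 : tdeg b ≤ tdeg a) : a = b := by
  by_contra hne
  have hpt := Finsupp.le_def.mp h
  obtain ⟨i, hi⟩ : ∃ i, a i ≠ b i := by
    by_contra hc; push_neg at hc; exact hne (Finsupp.ext hc)
  have hlt : tdeg a < tdeg b :=
    Finset.sum_lt_sum (fun j _ => hpt j) ⟨i, Finset.mem_univ i, lt_of_le_of_ne (hpt i) hi⟩
  omega

lemma bc_succ (O : Set (Term n)) (k : ℕ) :
    borderClosure O (k + 1) = borderClosure O k ∪ border (borderClosure O k) := rfl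

lemma bc_le_succ (O : Set (Term n)) (k : ℕ) :
    borderClosure O k ⊆ borderClosure O (k + 1) := by
  rw [bc_succ]; exact Set.subset_union_left

lemma self_subset_bc (O : Set (Term n)) (k : ℕ) : O ⊆ borderClosure O k := by
  induction k with
  | zero => exact subset_rfl
  | succ k ih => exact ih.trans (bc_le_succ O k)

lemma exists_gt_of_ne {τ m : Term n} (hle : τ ≤ m) (hne : τ ≠ m) : ∃ r, τ r < m r := by
  by_contra hc
  push_neg at hc
  exact hne (le_antisymm hle (Finsupp.le_def.mpr hc))

lemma mem_bc {O : Set (Term n)} (hO : IsOrderIdeal O) :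
    ∀ k (m τ : Term n), τ ∈ O → τ ≤ m → tdeg m ≤ tdeg τ + k → m ∈ borderClosure O k := by
  intro k
  induction k with
  | zero =>
    intro m τ hτ hle hd
    have : τ = m := eq_of_le_tdeg hle (by omega)
    exact this ▸ hτ
  | succ k ih =>
    intro m τ hτ hle hd
    by_cases he : τ = m
    · exact self_subset_bc O (k + 1) (he ▸ hτ)
    · obtain ⟨r, hr⟩ := exists_gt_of_ne hle he
      set m' := m - Finsupp.single r 1 with hm'def
      have hsle : (Finsupp.single r 1 : Term n) ≤ m := Finsupp.single_le_iff.mpr (by omega)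
      have hm' : m' + Finsupp.single r 1 = m := tsub_add_cancel_of_le hsle
      have hτm' : τ ≤ m' := by
        rw [Finsupp.le_def]
        intro i
        rw [hm'def, Finsupp.tsub_apply]
        rcases eq_or_ne i r with rfl | h
        · simp only [Finsupp.single_eq_same]; omega
        · rw [Finsupp.single_eq_of_ne' (Ne.symm h)]
          have := Finsupp.le_def.mp hle i; omega
      have hdm' : tdeg m' + 1 = tdeg m := by
        conv_rhs => rw [← hm']
        rw [tdeg_add', tdeg_single']
      have h1 : m' ∈ borderClosure O k := ih m' τ hτ hτm' (by omega)
      by_cases h2 : m ∈ borderClosure O k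
      · exact bc_le_succ O k h2
      · rw [bc_succ]
        exact Or.inr ⟨h2, r, m', h1, hm'.symm⟩

lemma bc_elim {O : Set (Term n)} :
    ∀ k (m : Term n), m ∈ borderClosure O k → ∃ τ ∈ O, τ ≤ m ∧ tdeg m ≤ tdeg τ + k := by
  intro k
  induction k with
  | zero => intro m hm; exact ⟨m, hm, le_rfl, by omega⟩
  | succ k ih =>
    intro m hm
    rw [bc_succ] at hm
    rcases hm with h | ⟨_, r, τ₁, hτ₁, rfl⟩
    · obtain ⟨τ, h1, h2, h3⟩ := ih m h
      exact ⟨τ, h1, h2, by omega⟩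
    · obtain ⟨τ, h1, h2, h3⟩ := ih τ₁ hτ₁
      refine ⟨τ, h1, h2.trans ?_, ?_⟩
      · exact Finsupp.le_def.mpr fun i => by simp [Finsupp.add_apply]
      · rw [tdeg_add', tdeg_single']; omega

lemma exists_border_div {O : Set (Term n)} (hO : IsOrderIdeal O) :
    ∀ d (m τ : Term n), tdeg m ≤ tdeg τ + d → τ ∈ O → τ ≤ m → m ∉ O →
      ∃ σ' ∈ border O, σ' ≤ m ∧ tdeg τ < tdeg σ' := by
  intro d
  induction d with
  | zero =>
    intro m τ h1 h2 h3 h4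
    exact absurd (eq_of_le_tdeg h3 (by omega) ▸ h2) h4
  | succ d ih =>
    intro m τ h1 h2 h3 h4
    have hne : τ ≠ m := by rintro rfl; exact h4 h2
    obtain ⟨r, hr⟩ := exists_gt_of_ne h3 hne
    set m' := τ + Finsupp.single r 1 with hm'def
    have hle : m' ≤ m := by
      rw [Finsupp.le_def]
      intro i
      rw [hm'def, Finsupp.add_apply]
      rcases eq_or_ne i r with rfl | h
      · simp only [Finsupp.single_eq_same]; omega
      · rw [Finsupp.single_eq_of_ne' (Ne.symm h)]
        have := Finsupp.le_def.mp h3 i; omega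
    have hdm' : tdeg m' = tdeg τ + 1 := by rw [hm'def, tdeg_add', tdeg_single']
    by_cases hO' : m' ∈ O
    · obtain ⟨σ', hs1, hs2, hs3⟩ := ih m m' (by omega) hO' hle h4
      exact ⟨σ', hs1, hs2, by omega⟩
    · exact ⟨m', ⟨hO', r, τ, h2, rfl⟩, hle, by omega⟩

lemma bc_nonempty {O : Set (Term n)} (hO : IsOrderIdeal O) (m : Term n) :
    m ∈ borderClosure O (tdeg m) :=
  mem_bc hO (tdeg m) m 0 (zero_mem_of hO) zero_le (by rw [tdeg_zero']; omega)

lemma ind_le_of {O : Set (Term n)} (hO : IsOrderIdeal O) {τ η : Term n} (hτ : τ ∈ O) :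
    ind O (η + τ) ≤ tdeg η := by
  apply Nat.sInf_le
  refine mem_bc hO (tdeg η) (η + τ) τ hτ ?_ (by rw [tdeg_add']; omega)
  exact Finsupp.le_def.mpr fun i => by simp [Finsupp.add_apply]

lemma tdeg_lt_ind {O : Set (Term n)} (hO : IsOrderIdeal O) {lab : Term n → ℕ}
    (hlab : DegOrderedLabeling O lab) {σ η : Term n} (hσ : σ ∈ border O)
    (hη : η ∈ mulSet O lab σ) : tdeg η < ind O (η + σ) := by
  by_contra hcon
  push_neg at hcon
  have hne : ({k | η + σ ∈ borderClosure O k}).Nonempty := ⟨tdeg (η + σ), bc_nonempty hO (η + σ)⟩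
  have hmem : η + σ ∈ borderClosure O (ind O (η + σ)) := by
    simpa [ind] using Nat.sInf_mem hne
  obtain ⟨τ, hτO, hτle, hτd⟩ := bc_elim _ _ hmem
  have hσle : σ ≤ η + σ := Finsupp.le_def.mpr fun i => by simp [Finsupp.add_apply]
  have hns : (η + σ) ∉ O := fun h => hσ.1 (hO.2 _ h σ hσle)
  have hdeg : tdeg σ ≤ tdeg τ := by
    have := tdeg_add' η σ; omega
  obtain ⟨σ', hσ'b, hσ'le, hσ'd⟩ :=
    exists_border_div hO (tdeg (η + σ)) (η + σ) τ (by omega) hτO hτle hns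
  have hdd : tdeg σ < tdeg σ' := lt_of_le_of_lt hdeg hσ'd
  rcases lt_trichotomy (lab σ) (lab σ') with h | h | h
  · exact hη σ' hσ'b h hσ'le
  · have : σ = σ' := hlab.1 hσ hσ'b h
    rw [this] at hdd; omega
  · have := hlab.2 σ' hσ'b σ hσ h; omega

lemma step_support {K : Type*} [Field K] {O : Set (Term n)}
    {g : Term n → MvPolynomial (Fin (n + 1)) K} (hg : IsPrebasis O g)
    {p : MvPolynomial (Fin (n + 1)) K} {σ η : Term n} (hσ : σ ∈ border O) :
    (p - p.coeff (η + σ) • (monomial η (1 : K) * g σ)).support ⊆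
      (p.support.erase (η + σ)) ∪ (monomial σ (1 : K) - g σ).support.image (η + ·) := by
  classical
  intro γ hγ
  rw [MvPolynomial.mem_support_iff, MvPolynomial.coeff_sub, MvPolynomial.coeff_smul,
    smul_eq_mul] at hγ
  have htail : (monomial σ (1 : K) - g σ).coeff σ = 0 := by
    by_contra h
    exact hσ.1 ((hg σ hσ σ (MvPolynomial.mem_support_iff.mpr h)).1)
  have hgσ : g σ = monomial σ 1 - (monomial σ (1 : K) - g σ) := by ring
  by_cases hc : γ = η + σ
  · exfalso
    subst hc
    rw [MvPolynomial.coeff_monomial_mul, one_mul] at hγ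
    have hone : (g σ).coeff σ = 1 := by
      conv_lhs => rw [hgσ]
      rw [MvPolynomial.coeff_sub, htail, MvPolynomial.coeff_monomial, if_pos rfl]
      ring
    rw [hone] at hγ
    simp at hγ
  · rcases ne_or_eq (p.coeff γ) 0 with h0 | h0
    · exact Finset.mem_union_left _
        (Finset.mem_erase.mpr ⟨hc, MvPolynomial.mem_support_iff.mpr h0⟩)
    · refine Finset.mem_union_right _ ?_
      have hne : (monomial η (1 : K) * g σ).coeff γ ≠ 0 := by
        intro h; rw [h0, h, mul_zero, sub_zero] at hγ; exact hγ rfl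
      rw [MvPolynomial.coeff_monomial_mul', one_mul] at hne
      split_ifs at hne with hle
      · have hδ : η + (γ - η) = γ := add_tsub_cancel_of_le hle
        have hδσ : γ - η ≠ σ := fun h => hc (by rw [← hδ, h])
        have hmem : (monomial σ (1 : K) - g σ).coeff (γ - η) ≠ 0 := by
          rw [MvPolynomial.coeff_sub, MvPolynomial.coeff_monomial, if_neg (fun h => hδσ h.symm),
            zero_sub, neg_ne_zero]
          exact hne
        exact Finset.mem_image.mpr ⟨γ - η, MvPolynomial.mem_support_iff.mpr hmem, hδ⟩
      · exact absurd rfl hne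

/-- **Noetherianity.** For a degree-ordered labeling, the border reduction relation
`→_G` admits no infinite reduction chain. -/
theorem reduction_noetherian (O : Set (Term n)) (hO : IsOrderIdeal O)
    (lab : Term n → ℕ) (hlab : DegOrderedLabeling O lab)
    (g : Term n → MvPolynomial (Fin (n + 1)) K) (hg : IsPrebasis O g) :
    ∀ f : ℕ → MvPolynomial (Fin (n + 1)) K, ¬ (∀ i : ℕ, Step O lab g (f i) (f (i + 1))) := by
  classical
  intro f hstep
  -- a uniform degree bound on all terms appearing along the chain
  set M := (f 0).support.sup tdeg with hM
  have hbound : ∀ i, ∀ β ∈ (f i).support, tdeg β ≤ M := by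
    intro i
    induction i with
    | zero => intro β hβ; exact Finset.le_sup hβ
    | succ i ih =>
      obtain ⟨σ, hσ, η, hη, hβ, hq⟩ := hstep i
      intro β hmem
      rw [hq] at hmem
      rcases Finset.mem_union.mp (step_support hg hσ hmem) with h | h
      · exact ih β (Finset.mem_of_mem_erase h)
      · obtain ⟨δ, hδ, rfl⟩ := Finset.mem_image.mp h
        have hδO := hg σ hσ δ hδ
        have heq : tdeg (η + δ) = tdeg (η + σ) := by
          rw [tdeg_add', tdeg_add', hδO.2]
        rw [heq]
        exact ih _ hβ
  -- the finite set of terms of degree at most M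
  have hfinite : Finite {β : Term n // tdeg β ≤ M} := by
    have hinj : Function.Injective (fun b : {β : Term n // tdeg β ≤ M} =>
        fun i : Fin (n + 1) => (⟨b.1 i, by
          have hle : b.1 i ≤ tdeg b.1 :=
            Finset.single_le_sum (f := fun j => b.1 j) (fun j _ => Nat.zero_le _)
              (Finset.mem_univ i)
          have := b.2
          omega⟩ : Fin (M + 1))) := by
      intro a b hab
      apply Subtype.ext
      apply Finsupp.ext
      intro i
      simpa using congrArg Fin.val (congrFun hab i)
    exact Finite.of_injective _ hinj
  have hfin : {β : Term n | tdeg β ≤ M}.Finite := by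
    have : Finite ↥{β : Term n | tdeg β ≤ M} := hfinite
    exact Set.toFinite _
  set N := hfin.toFinset.card with hN
  set w : Term n → ℕ := fun β => (N + 1) ^ (ind O β) with hw
  set μ : ℕ → ℕ := fun i => ∑ β ∈ (f i).support, w β with hμ
  have hdec : ∀ i, μ (i + 1) < μ i := by
    intro i
    obtain ⟨σ, hσ, η, hη, hβ, hq⟩ := hstep i
    set β := η + σ with hβdef
    set T := (monomial σ (1 : K) - g σ).support.image (η + ·) with hT
    have hsub : (f (i + 1)).support ⊆ (f i).support.erase β ∪ T := by
      rw [hq]; exact step_support hg hσ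
    have hTsub : T ⊆ hfin.toFinset := by
      intro γ hγ
      obtain ⟨δ, hδ, rfl⟩ := Finset.mem_image.mp hγ
      rw [Set.Finite.mem_toFinset]
      have hδO := hg σ hσ δ hδ
      show tdeg (η + δ) ≤ M
      calc tdeg (η + δ) = tdeg β := by rw [tdeg_add', tdeg_add', hδO.2]
        _ ≤ M := hbound i β hβ
    have hwT : ∀ γ ∈ T, w γ ≤ (N + 1) ^ (tdeg η) := by
      intro γ hγ
      obtain ⟨δ, hδ, rfl⟩ := Finset.mem_image.mp hγ
      have h1 : ind O (η + δ) ≤ tdeg η := ind_le_of hO (hg σ hσ δ hδ).1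
      exact Nat.pow_le_pow_right (by omega) h1
    have hwβ : (N + 1) ^ (tdeg η + 1) ≤ w β :=
      Nat.pow_le_pow_right (by omega) (tdeg_lt_ind hO hlab hσ hη)
    have hTsum : ∑ γ ∈ T, w γ ≤ N * (N + 1) ^ (tdeg η) := by
      calc ∑ γ ∈ T, w γ ≤ T.card • ((N + 1) ^ (tdeg η)) :=
            Finset.sum_le_card_nsmul T w _ hwT
        _ = T.card * (N + 1) ^ (tdeg η) := by rw [smul_eq_mul]
        _ ≤ N * (N + 1) ^ (tdeg η) :=
            Nat.mul_le_mul_right _ (Finset.card_le_card hTsub)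
    have hTlt : ∑ γ ∈ T, w γ < w β := by
      have hx : 0 < (N + 1) ^ (tdeg η) := Nat.pow_pos (by omega)
      have h2 : N * (N + 1) ^ (tdeg η) < (N + 1) * (N + 1) ^ (tdeg η) :=
        Nat.mul_lt_mul_of_lt_of_le (Nat.lt_succ_self N) le_rfl hx
      have h3 : (N + 1) * (N + 1) ^ (tdeg η) = (N + 1) ^ (tdeg η + 1) := by
        rw [pow_succ]; ring
      omega
    have hunion : ∑ γ ∈ (f i).support.erase β ∪ T, w γ ≤
        (∑ γ ∈ (f i).support.erase β, w γ) + ∑ γ ∈ T, w γ := by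
      rw [← Finset.union_sdiff_self_eq_union, Finset.sum_union Finset.disjoint_sdiff]
      exact Nat.add_le_add_left (Finset.sum_le_sum_of_subset (Finset.sdiff_subset)) _
    have hmain : μ i = w β + ∑ γ ∈ (f i).support.erase β, w γ :=
      (Finset.add_sum_erase _ w hβ).symm
    calc μ (i + 1) = ∑ γ ∈ (f (i + 1)).support, w γ := rfl
      _ ≤ ∑ γ ∈ (f i).support.erase β ∪ T, w γ := Finset.sum_le_sum_of_subset hsub
      _ ≤ (∑ γ ∈ (f i).support.erase β, w γ) + ∑ γ ∈ T, w γ := hunion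
      _ < (∑ γ ∈ (f i).support.erase β, w γ) + w β := by omega
      _ = μ i := by omega
  have hsum : ∀ i, μ i + i ≤ μ 0 := by
    intro i
    induction i with
    | zero => omega
    | succ i ih => have := hdec i; omega
  have := hsum (μ 0 + 1)
  omega

end Border
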